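/- For connected graphs G and H (each with at least one edge), ldim_f(G □ H) ≥ ldim_f(G). -/

import Mathlib

open scoped Classical
open Finset

namespace FracLocal

/-- The local resolving neighborhood of a (potential) edge `uv`:
vertices whose distances to `u` and `v` differ. -/
noncomputable def locRes {V : Type*} [Fintype V] (G : SimpleGraph V) (u v : V) : Finset V :=
  Finset.univ.filter (fun x => G.dist x u ≠ G.dist x v)

/-- A local resolving function: values in `[0,1]` summing to at least `1`
on every local resolving neighborhood of an edge. -/
def IsLRF {V : Type*} [Fintype V] (G : SimpleGraph V) (f : V → ℝ) : Prop :=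
  (∀ x, 0 ≤ f x ∧ f x ≤ 1) ∧ ∀ u v, G.Adj u v → 1 ≤ ∑ x ∈ locRes G u v, f x

/-- The fractional local metric dimension. -/
noncomputable def ldimf {V : Type*} [Fintype V] (G : SimpleGraph V) : ℝ :=
  sInf {w : ℝ | ∃ f : V → ℝ, IsLRF G f ∧ w = ∑ x, f x}

/-- The (integral) local metric dimension. -/
noncomputable def ldim {V : Type*} [Fintype V] (G : SimpleGraph V) : ℕ :=
  sInf {k : ℕ | ∃ S : Finset V, S.card = k ∧
    ∀ u v, G.Adj u v → (S ∩ locRes G u v).Nonempty}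

/-- `l(G)`: the minimum cardinality of a local resolving neighborhood of an edge. -/
noncomputable def lG {V : Type*} [Fintype V] (G : SimpleGraph V) : ℕ :=
  sInf {k : ℕ | ∃ u v, G.Adj u v ∧ (locRes G u v).card = k}

/-- The closed neighborhood `N[u]`. -/
def closedNbhd {V : Type*} (G : SimpleGraph V) (u : V) : Set V :=
  insert u (G.neighborSet u)

/-- `u` and `v` are true twins: distinct vertices with `N[u] = N[v]`. -/
def TrueTwins {V : Type*} (G : SimpleGraph V) (u v : V) : Prop :=
  u ≠ v ∧ closedNbhd G u = closedNbhd G v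

/-! Auxiliary lemmas -/

variable {α β : Type*} {G : SimpleGraph α} {H : SimpleGraph β}

lemma length_ofBoxProd_le {x y : α × β} :
    ∀ (w : (G.boxProd H).Walk x y),
      w.ofBoxProdLeft.length + w.ofBoxProdRight.length ≤ w.length := by
  intro w
  induction w with
  | nil => simp [SimpleGraph.Walk.ofBoxProdLeft, SimpleGraph.Walk.ofBoxProdRight]
  | cons h w ih =>
    rename_i a b c
    rw [SimpleGraph.Walk.ofBoxProdLeft, SimpleGraph.Walk.ofBoxProdRight,
      SimpleGraph.Walk.length_cons]
    unfold Or.by_cases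
    by_cases hG : G.Adj a.1 b.1 ∧ a.2 = b.2
    · rw [dif_pos hG]
      by_cases hH : H.Adj a.2 b.2 ∧ a.1 = b.1
      · exact absurd (hH.2 ▸ hG.1) (G.loopless.irrefl _)
      · rw [dif_neg hH]
        have heq : (hG.2 ▸ w.ofBoxProdRight : _).length = w.ofBoxProdRight.length := by
          obtain ⟨hadj, he⟩ := hG
          obtain ⟨a1, a2⟩ := a
          obtain ⟨b1, b2⟩ := b
          cases he
          rfl
        simp only [SimpleGraph.Walk.length_cons, heq]
        omega
    · rw [dif_neg hG]
      have hH : H.Adj a.2 b.2 ∧ a.1 = b.1 := h.resolve_left hG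
      rw [dif_pos hH]
      have : h.resolve_left hG = hH := rfl
      rw [this]
      obtain ⟨hH1, hH2⟩ := hH
      obtain ⟨a1, a2⟩ := a
      obtain ⟨b1, b2⟩ := b
      cases hH2
      simp only [SimpleGraph.Walk.length_cons]
      have := ih
      omega

lemma boxProd_dist (hG : G.Connected) (hH : H.Connected) [Fintype α] [Fintype β]
    (x y : α × β) :
    (G.boxProd H).dist x y = G.dist x.1 y.1 + H.dist x.2 y.2 := by
  apply le_antisymm
  · obtain ⟨p, hp⟩ := (hG.preconnected x.1 y.1).exists_walk_length_eq_dist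
    obtain ⟨q, hq⟩ := (hH.preconnected x.2 y.2).exists_walk_length_eq_dist
    have := SimpleGraph.dist_le ((p.boxProdLeft H x.2).append (q.boxProdRight G y.1))
    have e1 : (p.boxProdLeft H x.2).length = p.length := SimpleGraph.Walk.length_map _ _
    have e2 : (q.boxProdRight G y.1).length = q.length := SimpleGraph.Walk.length_map _ _
    rw [SimpleGraph.Walk.length_append, e1, e2, hp, hq] at this
    exact this
  · obtain ⟨w, hw⟩ := ((hG.boxProd hH).preconnected x y).exists_walk_length_eq_dist
    have h1 := SimpleGraph.dist_le w.ofBoxProdLeft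
    have h2 := SimpleGraph.dist_le w.ofBoxProdRight
    have h3 := length_ofBoxProd_le w
    omega

end FracLocal

open FracLocal in
/-- For connected graphs `G`, `H`, each with at least one edge,
`ldim_f(G □ H)` ≥ `ldim_f(G)`. -/
theorem stmt_19 {α β : Type*} [Fintype α] [Fintype β]
    (G : SimpleGraph α) (H : SimpleGraph β)
    (hG : G.Connected) (hH : H.Connected)
    (heG : ∃ u v : α, G.Adj u v) (heH : ∃ u v : β, H.Adj u v) :
    ldimf G ≤ ldimf (G.boxProd H) := by
  have hbox : (G.boxProd H).Connected := hG.boxProd hH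
  -- the box-product set is nonempty: constant 1 function
  have hone : IsLRF (G.boxProd H) (fun _ => (1 : ℝ)) := by
    constructor
    · intro x; exact ⟨zero_le_one, le_refl 1⟩
    · intro u v huv
      have hu : u ∈ locRes (G.boxProd H) u v := by
        simp only [locRes, Finset.mem_filter, Finset.mem_univ, true_and]
        rw [SimpleGraph.dist_self]
        intro h0
        exact huv.ne (hbox.dist_eq_zero_iff.mp h0.symm)
      rw [Finset.sum_const, nsmul_eq_mul, mul_one]
      exact_mod_cast Finset.card_pos.mpr ⟨u, hu⟩
  refine le_csInf ⟨∑ x : α × β, (1 : ℝ), ⟨fun _ => 1, hone, rfl⟩⟩ ?_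
  rintro w ⟨f, ⟨hf01, hfedge⟩, rfl⟩
  -- define the projected function on α
  set g : α → ℝ := fun a => min 1 (∑ b, f (a, b)) with hg
  have hs_nonneg : ∀ a, (0:ℝ) ≤ ∑ b, f (a, b) := fun a =>
    Finset.sum_nonneg fun b _ => (hf01 (a, b)).1
  have hgLRF : IsLRF G g := by
    constructor
    · intro a
      exact ⟨le_min zero_le_one (hs_nonneg a), min_le_left _ _⟩
    · intro u v huv
      obtain ⟨b0⟩ := hH.nonempty
      have hloc : locRes (G.boxProd H) (u, b0) (v, b0)
          = (locRes G u v) ×ˢ (Finset.univ : Finset β) := by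
        ext ⟨x, y⟩
        simp only [locRes, Finset.mem_filter, Finset.mem_univ, true_and, Finset.mem_product,
          and_true]
        rw [boxProd_dist hG hH, boxProd_dist hG hH]
        dsimp only
        omega
      have hedge := hfedge (u, b0) (v, b0) (by simp [huv])
      rw [hloc, Finset.sum_product] at hedge
      by_cases hex : ∃ x ∈ locRes G u v, (1:ℝ) ≤ ∑ b, f (x, b)
      · obtain ⟨x, hx, hx1⟩ := hex
        calc (1:ℝ) = g x := by simp [hg, min_eq_left, hx1]
          _ ≤ ∑ x ∈ locRes G u v, g x :=
            Finset.single_le_sum (fun a _ => le_min zero_le_one (hs_nonneg a)) hx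
      · push_neg at hex
        have : ∀ x ∈ locRes G u v, g x = ∑ b, f (x, b) := fun x hx => by
          simp [hg, min_eq_right (le_of_lt (hex x hx))]
        rw [Finset.sum_congr rfl this]
        exact hedge
  have hmem : (∑ a, g a) ∈ {w : ℝ | ∃ f : α → ℝ, IsLRF G f ∧ w = ∑ x, f x} :=
    ⟨g, hgLRF, rfl⟩
  have hbdd : BddBelow {w : ℝ | ∃ f : α → ℝ, IsLRF G f ∧ w = ∑ x, f x} := by
    refine ⟨0, ?_⟩
    rintro w ⟨f', hf', rfl⟩
    exact Finset.sum_nonneg fun a _ => (hf'.1 a).1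
  calc ldimf G ≤ ∑ a, g a := csInf_le hbdd hmem
    _ ≤ ∑ a, ∑ b, f (a, b) := Finset.sum_le_sum fun a _ => min_le_right _ _
    _ = ∑ x, f x := (Fintype.sum_prod_type f).symm
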